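/- Let Ω ⊆ ℝⁿ be measurable with boundary of measure zero and J radially symmetric integrable. Let R₀ be reflection across {x_n = 0} and x₀ a point with x̃₀ = R₀(x₀). Then H^J_Ω(x̃₀) − H^J_Ω(x₀) = 2 ∫_{Ω \ R₀(Ω)} (J(x₀ − y) − J(x₀ − R₀(y))) dy. -/

import Mathlib

open MeasureTheory Set Metric

/-- The nonlocal curvature of a set `Ω` with kernel `J` at a point `x`. -/
noncomputable def nonlocalCurvature {n : ℕ} (J : EuclideanSpace ℝ (Fin n) → ℝ)
    (Ω : Set (EuclideanSpace ℝ (Fin n))) (x : EuclideanSpace ℝ (Fin n)) : ℝ :=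
  ∫ y, J (x - y) * (Set.indicator Ωᶜ (fun _ => (1 : ℝ)) y - Set.indicator Ω (fun _ => (1 : ℝ)) y)

/-- Reflection of `ℝ^{n+1}` across the hyperplane `{x_n = 0}` (the last coordinate). -/
noncomputable def reflectZero {n : ℕ} (x : EuclideanSpace ℝ (Fin (n + 1))) :
    EuclideanSpace ℝ (Fin (n + 1)) :=
  WithLp.toLp 2 (Function.update x (Fin.last n) (-(x (Fin.last n))))

lemma reflectZero_apply {n : ℕ} (x : EuclideanSpace ℝ (Fin (n + 1))) (i : Fin (n + 1)) :
    reflectZero x i = if i = Fin.last n then -(x (Fin.last n)) else x i := by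
  simp [reflectZero, Function.update_apply]

lemma reflectZero_involutive {n : ℕ} : Function.Involutive (reflectZero (n := n)) := by
  intro x
  ext i
  by_cases h : i = Fin.last n
  · subst h; simp [reflectZero_apply]
  · simp [reflectZero_apply, h]

/-- `reflectZero` as a linear isometry equivalence. -/
noncomputable def reflectZeroLIE (n : ℕ) :
    EuclideanSpace ℝ (Fin (n + 1)) ≃ₗᵢ[ℝ] EuclideanSpace ℝ (Fin (n + 1)) where
  toFun := reflectZero
  invFun := reflectZero
  left_inv := reflectZero_involutive
  right_inv := reflectZero_involutive
  map_add' x y := by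
    ext i
    simp only [reflectZero_apply, PiLp.add_apply]
    split_ifs with h <;> ring
  map_smul' c x := by
    ext i
    simp only [reflectZero_apply, PiLp.smul_apply, RingHom.id_apply, smul_eq_mul]
    split_ifs with h <;> ring
  norm_map' x := by
    simp only [LinearEquiv.coe_mk, AddHom.coe_mk]
    rw [EuclideanSpace.norm_eq, EuclideanSpace.norm_eq]
    congr 1
    refine Finset.sum_congr rfl fun i _ => ?_
    change ‖(reflectZero x) i‖ ^ 2 = ‖x i‖ ^ 2
    by_cases h : i = Fin.last n
    · rw [reflectZero_apply, if_pos h, h]; simp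
    · rw [reflectZero_apply, if_neg h]

lemma reflectZero_sub {n : ℕ} (x y : EuclideanSpace ℝ (Fin (n + 1))) :
    reflectZero (x - y) = reflectZero x - reflectZero y :=
  (reflectZeroLIE n).toLinearEquiv.map_sub x y

lemma norm_reflectZero {n : ℕ} (x : EuclideanSpace ℝ (Fin (n + 1))) :
    ‖reflectZero x‖ = ‖x‖ := (reflectZeroLIE n).norm_map x

theorem nonlocalCurvature_reflection_difference
    {n : ℕ} (μ : ℝ → ℝ) (J : EuclideanSpace ℝ (Fin (n + 1)) → ℝ)
    (hJ : ∀ z, J z = μ ‖z‖) (hJint : Integrable J)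
    (Ω : Set (EuclideanSpace ℝ (Fin (n + 1)))) (hΩ : MeasurableSet Ω)
    (hfin : volume Ω ≠ ⊤) (hbd : volume (frontier Ω) = 0)
    (x₀ : EuclideanSpace ℝ (Fin (n + 1))) :
    nonlocalCurvature J Ω (reflectZero x₀) - nonlocalCurvature J Ω x₀
      = 2 * ∫ y in Ω \ (reflectZero '' Ω), (J (x₀ - y) - J (x₀ - reflectZero y)) := by
  set R : EuclideanSpace ℝ (Fin (n + 1)) → EuclideanSpace ℝ (Fin (n + 1)) := reflectZero with hR
  have hRinv : Function.Involutive R := reflectZero_involutive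
  have hRmp : MeasurePreserving R volume volume := (reflectZeroLIE n).measurePreserving
  have hRemb : MeasurableEmbedding R :=
    (reflectZeroLIE n).toHomeomorph.measurableEmbedding
  -- key norm identity: J (R x₀ - y) = J (x₀ - R y)
  have hJR : ∀ y, J (R x₀ - y) = J (x₀ - R y) := by
    intro y
    rw [hJ, hJ]
    congr 1
    calc ‖R x₀ - y‖ = ‖R (R x₀ - y)‖ := (norm_reflectZero _).symm
      _ = ‖R (R x₀) - R y‖ := by rw [hR]; rw [reflectZero_sub]
      _ = ‖x₀ - R y‖ := by rw [hRinv x₀]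
  set g : EuclideanSpace ℝ (Fin (n + 1)) → ℝ := fun y =>
    Set.indicator Ωᶜ (fun _ => (1 : ℝ)) y - Set.indicator Ω (fun _ => (1 : ℝ)) y with hg
  set f : EuclideanSpace ℝ (Fin (n + 1)) → ℝ := fun y => J (x₀ - y) with hf
  have hfint : Integrable f := hJint.comp_sub_left x₀
  have hgmeas : Measurable g :=
    (measurable_const.indicator hΩ.compl).sub (measurable_const.indicator hΩ)
  have hgabs : ∀ x, |g x| ≤ 2 := by
    intro x
    by_cases h : x ∈ Ω <;> simp [hg, h] <;> norm_num
  have hgbd : ∀ c : EuclideanSpace ℝ (Fin (n + 1)) → ℝ, Measurable c → (∀ x, |c x| ≤ 2) →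
      Integrable (fun y => f y * c y) := by
    intro c hc hcb
    have := hfint.bdd_mul (c := 2) hc.aestronglyMeasurable (Filter.Eventually.of_forall fun x => by simpa using hcb x)
    exact this.congr (Filter.Eventually.of_forall fun x => mul_comm _ _)
  -- rewrite the curvature at the reflected point via change of variables
  have step1 : nonlocalCurvature J Ω (R x₀) = ∫ y, f y * g (R y) := by
    unfold nonlocalCurvature
    calc (∫ y, J (R x₀ - y) * g y) = ∫ y, f (R y) * g (R (R y)) := by
          refine integral_congr_ae (Filter.Eventually.of_forall fun y => ?_)
          rw [hf]
          simp only
          rw [← hJR y, hRinv y]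
      _ = ∫ y, f y * g (R y) := hRmp.integral_comp hRemb (fun z => f z * g (R z))
  have step0 : nonlocalCurvature J Ω x₀ = ∫ y, f y * g y := rfl
  have himg : R '' Ω = R ⁻¹' Ω :=
    congrFun (Set.image_eq_preimage_of_inverse hRinv.leftInverse hRinv.rightInverse) Ω
  set A : Set (EuclideanSpace ℝ (Fin (n + 1))) := Ω \ (R '' Ω) with hA
  set B : Set (EuclideanSpace ℝ (Fin (n + 1))) := (R '' Ω) \ Ω with hB
  have hRΩmeas : MeasurableSet (R '' Ω) := by
    rw [himg]; exact hΩ.preimage hRmp.measurable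
  have hAmeas : MeasurableSet A := hΩ.diff hRΩmeas
  have hBmeas : MeasurableSet B := hRΩmeas.diff hΩ
  have hptwise : ∀ y, g (R y) - g y
      = 2 * (Set.indicator A (fun _ => (1:ℝ)) y - Set.indicator B (fun _ => (1:ℝ)) y) := by
    intro y
    have hmem : R y ∈ Ω ↔ y ∈ R '' Ω := by rw [himg]; rfl
    simp only [hg, hA, hB]
    by_cases h1 : y ∈ Ω <;> by_cases h2 : y ∈ R '' Ω <;>
      simp [h1, h2, hmem] <;> ring
  have hint1 : Integrable (fun y => f y * g (R y)) :=
    hgbd _ (hgmeas.comp hRmp.measurable) (fun x => hgabs (R x))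
  have hint0 : Integrable (fun y => f y * g y) := hgbd _ hgmeas hgabs
  have hdiff : nonlocalCurvature J Ω (R x₀) - nonlocalCurvature J Ω x₀
      = ∫ y, f y * (g (R y) - g y) := by
    rw [step1, step0, ← integral_sub hint1 hint0]
    congr 1; funext y; ring
  rw [hdiff]
  have hfA : IntegrableOn f A := hfint.integrableOn
  have hfB : IntegrableOn f B := hfint.integrableOn
  have hindA : (fun y => Set.indicator A (fun _ => f y) y) = Set.indicator A f := by
    funext y; by_cases h : y ∈ A <;> simp [h]
  have hindB : (fun y => Set.indicator B (fun _ => f y) y) = Set.indicator B f := by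
    funext y; by_cases h : y ∈ B <;> simp [h]
  have hAB : (∫ y, f y * (g (R y) - g y))
      = 2 * ((∫ y in A, f y) - ∫ y in B, f y) := by
    have hfun : (fun y => f y * (g (R y) - g y))
        = fun y => 2 * (Set.indicator A (fun _ => f y) y - Set.indicator B (fun _ => f y) y) := by
      funext y
      rw [hptwise y]
      by_cases h1 : y ∈ A <;> by_cases h2 : y ∈ B <;> simp [h1, h2] <;> ring
    rw [hfun, integral_const_mul]
    congr 1
    have hiA : Integrable (fun y => Set.indicator A (fun _ => f y) y) := by
      rw [hindA]; exact hfA.integrable_indicator hAmeas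
    have hiB : Integrable (fun y => Set.indicator B (fun _ => f y) y) := by
      rw [hindB]; exact hfB.integrable_indicator hBmeas
    rw [integral_sub hiA hiB]
    congr 1
    · rw [hindA, integral_indicator hAmeas]
    · rw [hindB, integral_indicator hBmeas]
  rw [hAB]
  -- change of variables on B : B = R '' A
  have hBimg : B = R '' A := by
    rw [hA, hB, Set.image_diff hRinv.injective, ← Set.image_comp, hRinv.comp_self,
      Set.image_id]
  have hBint : (∫ y in B, f y) = ∫ y in A, f (R y) := by
    rw [hBimg]
    exact hRmp.setIntegral_image_emb hRemb f A
  rw [hBint]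
  congr 1
  have hfRA : IntegrableOn (fun y => f (R y)) A := by
    have : Integrable (fun y => f (R y)) :=
      (hRmp.integrable_comp hfint.aestronglyMeasurable).mpr hfint
    exact this.integrableOn
  rw [← integral_sub hfA hfRA]
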